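/- Let G be a finite weighted DAG, let P ∈ Π(s1, t1), let x, y ∈ V(P) with x preceding y on P, and suppose dist(s1, y) − dist(s1, x) = dist(s2, y) − dist(s2, x). Let Qx ∈ Π(s2, t2) be a shortest path containing x and Qy ∈ Π(s2, t2) a shortest path containing y. Then the concatenation Qx[s2, x] · P[x, y] · Qy[y, t2] is a shortest path from s2 to t2. -/

import Mathlib

open scoped BigOperators

namespace DSP

variable {V : Type*} [Fintype V] [DecidableEq V]

/-- A path: a nonempty list of distinct vertices in which each consecutive
pair is joined by a directed edge. -/
def IsPath (E : V → V → Prop) (p : List V) : Prop :=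
  p ≠ [] ∧ p.Nodup ∧ p.Chain' E

/-- A path from `x` to `y`. -/
def IsPathFrom (E : V → V → Prop) (p : List V) (x y : V) : Prop :=
  IsPath E p ∧ p.head? = some x ∧ p.getLast? = some y

/-- The (ordered) list of edges of a path. -/
def pathEdges (p : List V) : List (V × V) := p.zip p.tail

/-- The weight of a path: the sum of its edge weights. -/
def pathWeight (ℓ : V → V → ℝ) (p : List V) : ℝ :=
  ((pathEdges p).map fun e => ℓ e.1 e.2).sum

/-- `dist x y` : the minimum weight of a path from `x` to `y`
(`⊤` if there is no such path). -/
noncomputable def dist (E : V → V → Prop) (ℓ : V → V → ℝ) (x y : V) : EReal :=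
  sInf {w : EReal | ∃ p : List V, IsPathFrom E p x y ∧ (pathWeight ℓ p : EReal) = w}

/-- A shortest path from `x` to `y` : a path from `x` to `y` whose weight
equals `dist x y`.  `Π(x, y)` is the set of all such paths. -/
def IsShortestPath (E : V → V → Prop) (ℓ : V → V → ℝ) (p : List V) (x y : V) : Prop :=
  IsPathFrom E p x y ∧ (pathWeight ℓ p : EReal) = dist E ℓ x y

/-- A directed cycle: a closed walk with at least one edge whose internal
vertices are pairwise distinct. -/
def IsCycle (E : V → V → Prop) (p : List V) : Prop :=
  2 ≤ p.length ∧ p.Chain' E ∧ p.head? = p.getLast? ∧ p.tail.Nodup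

/-- `G` contains no directed cycle of negative or zero total weight. -/
def NoNonposCycle (E : V → V → Prop) (ℓ : V → V → ℝ) : Prop :=
  ∀ p : List V, IsCycle E p → 0 < pathWeight ℓ p

/-- `G` is a DAG: it contains no directed cycle. -/
def Acyclic (E : V → V → Prop) : Prop :=
  ∀ p : List V, ¬ IsCycle E p

/-- `x` precedes `y` on the path `p` (`x = y` allowed). -/
def Precedes (p : List V) (x y : V) : Prop :=
  x ∈ p ∧ y ∈ p ∧ p.idxOf x ≤ p.idxOf y

/-- `subpath p x y` : the subpath `p[x, y]` of `p` from `x` to `y`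
(for `x` preceding `y` on `p`). -/
def subpath (p : List V) (x y : V) : List V :=
  (p.take (p.idxOf y + 1)).drop (p.idxOf x)

/-- Concatenation `p · q` of two paths (the last vertex of `p` coinciding
with the first vertex of `q`). -/
def pathConcat (p q : List V) : List V := p ++ q.tail

/-- A vertex is internal to a path if it lies on it and is not an endpoint. -/
def Internal (p : List V) (v : V) : Prop :=
  v ∈ p ∧ p.head? ≠ some v ∧ p.getLast? ≠ some v

/-- Paths `p1` from `x1` to `y1` and `p2` from `x2` to `y2` are internally
vertex-disjoint: they share no vertices except possibly those in
`{x1, y1} ∩ {x2, y2}`. -/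
def InternallyDisjoint (p1 : List V) (x1 y1 : V) (p2 : List V) (x2 y2 : V) : Prop :=
  ∀ u, u ∈ p1 → u ∈ p2 → u ∈ ({x1, y1} ∩ {x2, y2} : Set V)

/-- `(a, b)` is a twin-crossing pair for paths `p1`, `p2`. -/
def TwinCrossingPair (p1 p2 : List V) (a b : V) : Prop :=
  a ≠ b ∧ Precedes p1 a b ∧ Precedes p2 a b ∧ subpath p1 a b ≠ subpath p2 a b

/-- The swap operation `φ_{a,b}(P1, P2)`. -/
def swap (p1 : List V) (x1 y1 : V) (p2 : List V) (x2 y2 : V) (a b : V) :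
    List V × List V :=
  (pathConcat (pathConcat (subpath p1 x1 a) (subpath p2 a b)) (subpath p1 b y1),
   pathConcat (pathConcat (subpath p2 x2 a) (subpath p1 a b)) (subpath p2 b y2))

/-- The graph with vertex `u` deleted. -/
def deleteVertex (E : V → V → Prop) (u : V) : V → V → Prop :=
  fun a b => E a b ∧ a ≠ u ∧ b ≠ u

/-- `u` is distance-critical for `(x, y)` : deleting `u` strictly increases
the distance from `x` to `y`. -/
def DistCritical (E : V → V → Prop) (ℓ : V → V → ℝ) (x y u : V) : Prop :=
  dist E ℓ x y < dist (deleteVertex E u) ℓ x y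

/-- `Δ(x, y)` : the distance-critical vertices for `(x, y)` together with the
endpoints `x`, `y`. -/
def Delta (E : V → V → Prop) (ℓ : V → V → ℝ) (x y : V) : Set V :=
  {u | DistCritical E ℓ x y u} ∪ {x, y}

/-- `δ(x, y) = |Δ(x, y)|`. -/
noncomputable def deltaCard (E : V → V → Prop) (ℓ : V → V → ℝ) (x y : V) : ℕ :=
  (Delta E ℓ x y).ncard

/-- `(a, b)` is a concordant pair for paths `p1` (from `x1` to `y1`) and
`p2` (from `x2` to `y2`). -/
def ConcordantPair (p1 : List V) (x1 y1 : V) (p2 : List V) (x2 y2 : V) (a b : V) : Prop :=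
  a ∉ ({x1, y1} ∩ {x2, y2} : Set V) ∧ b ∉ ({x1, y1} ∩ {x2, y2} : Set V) ∧
  Precedes p1 a b ∧ Precedes p2 a b ∧
  InternallyDisjoint (subpath p1 x1 a) x1 a (subpath p2 x2 a) x2 a ∧
  InternallyDisjoint (subpath p1 b y1) b y1 (subpath p2 b y2) b y2

/-- `𝒞(P1, P2)` : the set of concordant pairs for `(P1, P2)`. -/
def concordantSet (p1 : List V) (x1 y1 : V) (p2 : List V) (x2 y2 : V) : Set (V × V) :=
  {c | ConcordantPair p1 x1 y1 p2 x2 y2 c.1 c.2}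

/-- The interaction complexity `γ(P1, P2) = Σ_{(v,w) ∈ 𝒞(P1,P2)} δ(v, w)`. -/
noncomputable def gamma (E : V → V → Prop) (ℓ : V → V → ℝ)
    (p1 : List V) (x1 y1 : V) (p2 : List V) (x2 y2 : V) : ℕ :=
  ∑ᶠ c ∈ concordantSet p1 x1 y1 p2 x2 y2, deltaCard E ℓ c.1 c.2

/-- `E(x, y)` : the set of edges lying on at least one shortest path
from `x` to `y`. -/
def shortestEdges (E : V → V → Prop) (ℓ : V → V → ℝ) (x y : V) : Set (V × V) :=
  {e | ∃ p : List V, IsShortestPath E ℓ p x y ∧ e ∈ pathEdges p}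

section Poly

variable (F : Type*) [Field F] [CharP F 2]

/-- The monomial `f(P) = ∏_{e ∈ E(P)} z_e` of a path. -/
noncomputable def pathMon (p : List V) : MvPolynomial (V × V) F :=
  ((pathEdges p).map fun e => MvPolynomial.X e).prod

/-- The enumerating polynomial of a collection of paths. -/
noncomputable def enumPoly (S : Set (List V)) : MvPolynomial (V × V) F :=
  ∑ᶠ p ∈ S, pathMon F p

/-- The enumerating polynomial of a collection of pairs of paths. -/
noncomputable def enumPoly2 (S : Set (List V × List V)) : MvPolynomial (V × V) F :=
  ∑ᶠ q ∈ S, pathMon F q.1 * pathMon F q.2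

variable (E : V → V → Prop) (ℓ : V → V → ℝ)

/-- `F(x, y)` : the enumerating polynomial of `Π(x, y)`. -/
noncomputable def Fpoly (x y : V) : MvPolynomial (V × V) F :=
  enumPoly F {p : List V | IsShortestPath E ℓ p x y}

end Poly

variable (E : V → V → Prop) (ℓ : V → V → ℝ)

/-- The collection of internally vertex-disjoint pairs
`(P1, P2) ∈ Π(x1, y1) × Π(x2, y2)`. -/
def disjPairs (x1 y1 x2 y2 : V) : Set (List V × List V) :=
  {q | IsShortestPath E ℓ q.1 x1 y1 ∧ IsShortestPath E ℓ q.2 x2 y2 ∧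
       InternallyDisjoint q.1 x1 y1 q.2 x2 y2}

/-- Pairs `(P1, P2) ∈ Π(x1, y1) × Π(x2, y2)` such that `v ∈ V(P1) ∩ V(P2)`
and the prefix `P1[x1, v]` and the suffix `P2[v, y2]` are internally
vertex-disjoint (defining `H_v`). -/
def HvPairs (v x1 y1 x2 y2 : V) : Set (List V × List V) :=
  {q | IsShortestPath E ℓ q.1 x1 y1 ∧ IsShortestPath E ℓ q.2 x2 y2 ∧
       v ∈ q.1 ∧ v ∈ q.2 ∧
       InternallyDisjoint (subpath q.1 x1 v) x1 v (subpath q.2 v y2) v y2}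

/-- Pairs `(P1, P2) ∈ Π(x1, y1) × Π(x2, y2)` such that
`(a, v) ∈ E(P1) ∩ E(P2)` and the prefix `P1[x1, a]` and the suffix
`P2[v, y2]` are internally vertex-disjoint (defining `H_{av}`). -/
def HavPairs (a v x1 y1 x2 y2 : V) : Set (List V × List V) :=
  {q | IsShortestPath E ℓ q.1 x1 y1 ∧ IsShortestPath E ℓ q.2 x2 y2 ∧
       (a, v) ∈ pathEdges q.1 ∧ (a, v) ∈ pathEdges q.2 ∧
       InternallyDisjoint (subpath q.1 x1 a) x1 a (subpath q.2 v y2) v y2}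

/-- Pairs `(P1, P2) ∈ Π(x1, y1) × Π(x2, y2)` such that `v ∈ V(P1) ∩ V(P2)`
and the prefix `P1[x1, v]` is internally vertex-disjoint from both
`P2[x2, v]` and `P2[v, y2]` (defining `D_v`). -/
def DvPairs (v x1 y1 x2 y2 : V) : Set (List V × List V) :=
  {q | IsShortestPath E ℓ q.1 x1 y1 ∧ IsShortestPath E ℓ q.2 x2 y2 ∧
       v ∈ q.1 ∧ v ∈ q.2 ∧
       InternallyDisjoint (subpath q.1 x1 v) x1 v (subpath q.2 x2 v) x2 v ∧
       InternallyDisjoint (subpath q.1 x1 v) x1 v (subpath q.2 v y2) v y2}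

/-- Pairs `(P1, P2) ∈ Π(x1, y1) × Π(x2, y2)` with interaction complexity
`γ(P1, P2) ≤ k` (defining `F_{disj,k}`). -/
def disjkPairs (k : ℤ) (x1 y1 x2 y2 : V) : Set (List V × List V) :=
  {q | IsShortestPath E ℓ q.1 x1 y1 ∧ IsShortestPath E ℓ q.2 x2 y2 ∧
       (gamma E ℓ q.1 x1 y1 q.2 x2 y2 : ℤ) ≤ k}

/-- Pairs `(P1, P2) ∈ Π(x1, y1) × Π(x2, y2)` with `γ(P1, P2) ≤ k` such that
`(v, w) ∈ 𝒞(P1, P2)` and `(v, w)` is the concordant pair appearing first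
along `P1` (defining `D_{v,w,k}`). -/
def DvwkPairs (k : ℤ) (v w x1 y1 x2 y2 : V) : Set (List V × List V) :=
  {q | IsShortestPath E ℓ q.1 x1 y1 ∧ IsShortestPath E ℓ q.2 x2 y2 ∧
       (gamma E ℓ q.1 x1 y1 q.2 x2 y2 : ℤ) ≤ k ∧
       (v, w) ∈ concordantSet q.1 x1 y1 q.2 x2 y2 ∧
       ∀ c ∈ concordantSet q.1 x1 y1 q.2 x2 y2, q.1.idxOf v ≤ q.1.idxOf c.1}

/-- Pairs `(P1, P2) ∈ Π(x1, y1) × Π(x2, y2)` such that `v` and `w` lie on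
both paths with `v` preceding `w` on both, the subpaths `P1[x1, v]` and
`P2[w, y2]` are internally vertex-disjoint, and
`γ(P1[v, y1], P2[x2, w]) ≤ k` (defining `H_{v,w,k}`). -/
def HvwkPairs (k : ℤ) (v w x1 y1 x2 y2 : V) : Set (List V × List V) :=
  {q | IsShortestPath E ℓ q.1 x1 y1 ∧ IsShortestPath E ℓ q.2 x2 y2 ∧
       Precedes q.1 v w ∧ Precedes q.2 v w ∧
       InternallyDisjoint (subpath q.1 x1 v) x1 v (subpath q.2 w y2) w y2 ∧
       (gamma E ℓ (subpath q.1 v y1) v y1 (subpath q.2 x2 w) x2 w : ℤ) ≤ k}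

/-- As `HvwkPairs`, additionally requiring the edge `(a, v)` on both paths
(disjointness imposed on `P1[x1, a]` and `P2[w, y2]`), defining `H_{av,w,k}`. -/
def HavwkPairs (k : ℤ) (a v w x1 y1 x2 y2 : V) : Set (List V × List V) :=
  {q | IsShortestPath E ℓ q.1 x1 y1 ∧ IsShortestPath E ℓ q.2 x2 y2 ∧
       Precedes q.1 v w ∧ Precedes q.2 v w ∧
       (a, v) ∈ pathEdges q.1 ∧ (a, v) ∈ pathEdges q.2 ∧
       InternallyDisjoint (subpath q.1 x1 a) x1 a (subpath q.2 w y2) w y2 ∧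
       (gamma E ℓ (subpath q.1 v y1) v y1 (subpath q.2 x2 w) x2 w : ℤ) ≤ k}

/-- As `HvwkPairs`, additionally requiring the edge `(w, b)` on both paths
(disjointness imposed on `P1[x1, v]` and `P2[b, y2]`), defining `H_{v,wb,k}`. -/
def HvwbkPairs (k : ℤ) (v w b x1 y1 x2 y2 : V) : Set (List V × List V) :=
  {q | IsShortestPath E ℓ q.1 x1 y1 ∧ IsShortestPath E ℓ q.2 x2 y2 ∧
       Precedes q.1 v w ∧ Precedes q.2 v w ∧
       (w, b) ∈ pathEdges q.1 ∧ (w, b) ∈ pathEdges q.2 ∧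
       InternallyDisjoint (subpath q.1 x1 v) x1 v (subpath q.2 b y2) b y2 ∧
       (gamma E ℓ (subpath q.1 v y1) v y1 (subpath q.2 x2 w) x2 w : ℤ) ≤ k}

/-- As `HvwkPairs`, additionally requiring both edges `(a, v)` and `(w, b)`
on both paths (disjointness imposed on `P1[x1, a]` and `P2[b, y2]`),
defining `H_{av,wb,k}`. -/
def HavwbkPairs (k : ℤ) (a v w b x1 y1 x2 y2 : V) : Set (List V × List V) :=
  {q | IsShortestPath E ℓ q.1 x1 y1 ∧ IsShortestPath E ℓ q.2 x2 y2 ∧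
       Precedes q.1 v w ∧ Precedes q.2 v w ∧
       (a, v) ∈ pathEdges q.1 ∧ (a, v) ∈ pathEdges q.2 ∧
       (w, b) ∈ pathEdges q.1 ∧ (w, b) ∈ pathEdges q.2 ∧
       InternallyDisjoint (subpath q.1 x1 a) x1 a (subpath q.2 b y2) b y2 ∧
       (gamma E ℓ (subpath q.1 v y1) v y1 (subpath q.2 x2 w) x2 w : ℤ) ≤ k}


set_option linter.unusedSectionVars false

/-! ### Segment (take/drop) helpers -/

lemma seg_infix (l : List V) (i j : ℕ) : (l.take j).drop i <:+: l :=
  (List.drop_suffix i _).isInfix.trans (List.take_prefix j l).isInfix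

lemma seg_length (l : List V) (i j : ℕ) (hj : j < l.length) :
    ((l.take (j+1)).drop i).length = j + 1 - i := by
  rw [List.length_drop, List.length_take]; omega

lemma seg_head? (l : List V) (i j : ℕ) (hij : i ≤ j) (hj : j < l.length)
    (hi : i < l.length := lt_of_le_of_lt hij hj) :
    ((l.take (j+1)).drop i).head? = some l[i] := by
  rw [List.head?_drop, List.getElem?_take, if_pos (by omega), List.getElem?_eq_getElem hi]

lemma seg_getLast? (l : List V) (i j : ℕ) (hij : i ≤ j) (hj : j < l.length) :
    ((l.take (j+1)).drop i).getLast? = some l[j] := by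
  rw [List.getLast?_eq_getElem?, seg_length l i j hj]
  have h1 : j + 1 - i - 1 = j - i := by omega
  rw [h1, List.getElem?_drop, List.getElem?_take, if_pos (by omega)]
  have h2 : i + (j - i) = j := by omega
  rw [h2, List.getElem?_eq_getElem hj]

lemma seg_append (l : List V) (i j k : ℕ) (hij : i ≤ j) (hjk : j ≤ k) (hk : k < l.length) :
    (l.take (j+1)).drop i ++ ((l.take (k+1)).drop j).tail = (l.take (k+1)).drop i := by
  rw [List.tail_drop]
  have hm : l.take (j+1) = (l.take (k+1)).take (j+1) := by
    rw [List.take_take, min_eq_left (by omega)]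
  rw [hm]
  conv_rhs => rw [← List.take_append_drop (j+1) (l.take (k+1))]
  rw [List.drop_append]
  have hlen : ((l.take (k+1)).take (j+1)).length = j + 1 := by
    rw [List.length_take, List.length_take]; omega
  rw [hlen, Nat.sub_eq_zero_of_le (by omega), List.drop_zero]

/-! ### subpath lemmas -/

lemma mem_of_head? {l : List V} {a : V} (h : l.head? = some a) : a ∈ l := by
  cases l with
  | nil => simp at h
  | cons b t => simp_all

lemma mem_of_getLast? {l : List V} {a : V} (h : l.getLast? = some a) : a ∈ l := by
  have : a ∈ l.reverse := mem_of_head? (by rwa [List.head?_reverse])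
  simpa using this

lemma indexOf_head {l : List V} {a : V} (h : l.head? = some a) : l.idxOf a = 0 := by
  cases l with
  | nil => simp at h
  | cons b t =>
    simp only [List.head?_cons, Option.some_inj] at h
    subst h; simp

lemma indexOf_getLast {l : List V} {a : V} (hnd : l.Nodup) (h : l.getLast? = some a) :
    l.idxOf a = l.length - 1 := by
  have hm : a ∈ l := mem_of_getLast? h
  have hlt : l.idxOf a < l.length := List.idxOf_lt_length_iff.2 hm
  have hne : l ≠ [] := by rintro rfl; simp at h
  have hlen : 0 < l.length := List.length_pos_iff.2 hne
  have hget : l[l.length - 1] = a := by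
    rw [List.getLast?_eq_getElem?, List.getElem?_eq_getElem (by omega)] at h
    exact Option.some_injective _ h
  have : l[l.idxOf a]'hlt = l[l.length - 1]'(by omega) := by
    rw [List.getElem_idxOf, hget]
  exact hnd.getElem_inj_iff.1 this

lemma subpath_head? {p : List V} {u v : V} (hu : u ∈ p) (hv : v ∈ p)
    (huv : p.idxOf u ≤ p.idxOf v) : (subpath p u v).head? = some u := by
  unfold subpath
  rw [seg_head? p _ _ huv (List.idxOf_lt_length_iff.2 hv), List.getElem_idxOf]

lemma subpath_getLast? {p : List V} {u v : V} (hu : u ∈ p) (hv : v ∈ p)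
    (huv : p.idxOf u ≤ p.idxOf v) : (subpath p u v).getLast? = some v := by
  unfold subpath
  rw [seg_getLast? p _ _ huv (List.idxOf_lt_length_iff.2 hv), List.getElem_idxOf]

lemma subpath_ne_nil {p : List V} {u v : V} (hu : u ∈ p) (hv : v ∈ p)
    (huv : p.idxOf u ≤ p.idxOf v) : subpath p u v ≠ [] := by
  intro h
  have := subpath_head? hu hv huv
  rw [h] at this; simp at this

lemma subpath_infix (p : List V) (u v : V) : subpath p u v <:+: p := seg_infix p _ _

lemma subpath_concat' {p : List V} {u v w : V} (hu : u ∈ p) (hv : v ∈ p) (hw : w ∈ p)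
    (h1 : p.idxOf u ≤ p.idxOf v) (h2 : p.idxOf v ≤ p.idxOf w) :
    pathConcat (subpath p u v) (subpath p v w) = subpath p u w :=
  seg_append p _ _ _ h1 h2 (List.idxOf_lt_length_iff.2 hw)

lemma subpath_eq_self {p : List V} {a b : V} (hnd : p.Nodup)
    (ha : p.head? = some a) (hb : p.getLast? = some b) : subpath p a b = p := by
  have hne : p ≠ [] := by rintro rfl; simp at ha
  have hlen : 0 < p.length := List.length_pos_iff.2 hne
  unfold subpath
  rw [indexOf_head ha, indexOf_getLast hnd hb, List.drop_zero,
    Nat.sub_add_cancel (by omega), List.take_length]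

/-! ### pathConcat lemmas -/

lemma pathConcat_head? {p : List V} (q : List V) (hp : p ≠ []) :
    (pathConcat p q).head? = p.head? := by
  cases p with
  | nil => exact absurd rfl hp
  | cons a t => rfl

lemma pathConcat_getLast? {p q : List V} (h : p.getLast? = q.head?) (hq : q ≠ []) :
    (pathConcat p q).getLast? = q.getLast? := by
  obtain ⟨v, t, rfl⟩ : ∃ v t, q = v :: t := by
    cases q with
    | nil => exact absurd rfl hq
    | cons v t => exact ⟨v, t, rfl⟩
  cases t with
  | nil =>
    simp only [pathConcat, List.tail_cons, List.append_nil]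
    rw [h]; rfl
  | cons w t' =>
    simp only [pathConcat, List.tail_cons]
    rw [List.getLast?_append]
    rfl

lemma pathConcat_ne_nil {p : List V} (q : List V) (hp : p ≠ []) : pathConcat p q ≠ [] := by
  unfold pathConcat
  simp [hp]

lemma pathConcat_chain' {E : V → V → Prop} {p q : List V}
    (hp : p.Chain' E) (hq : q.Chain' E) (h : p.getLast? = q.head?) :
    (pathConcat p q).Chain' E := by
  refine List.IsChain.append hp hq.tail ?_
  intro x hx y hy
  have hqx : q.head? = some x := by rw [← h, hx]
  obtain ⟨t, rfl⟩ : ∃ t, q = x :: t := by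
    cases q with
    | nil => simp at hqx
    | cons a t => simp at hqx; exact ⟨t, by rw [hqx]⟩
  exact (List.isChain_cons.1 hq).1 y hy

/-! ### pathEdges / pathWeight lemmas -/

lemma pathEdges_cons_of_ne_nil {m : List V} (a : V) (hm : m ≠ []) :
    pathEdges (a :: m) = (a, m.head hm) :: pathEdges m := by
  cases m with
  | nil => exact absurd rfl hm
  | cons b t => rfl

lemma head_pathConcat {p : List V} (q : List V) (hp : p ≠ [])
    (h : pathConcat p q ≠ []) : (pathConcat p q).head h = p.head hp := by
  have h1 := pathConcat_head? q hp
  rw [List.head?_eq_head h, List.head?_eq_head hp] at h1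
  exact Option.some_injective _ h1

lemma pathEdges_pathConcat {p q : List V} (hp : p ≠ []) (h : p.getLast? = q.head?) :
    pathEdges (pathConcat p q) = pathEdges p ++ pathEdges q := by
  induction p with
  | nil => exact absurd rfl hp
  | cons a p' ih =>
    cases p' with
    | nil =>
      obtain ⟨t, rfl⟩ : ∃ t, q = a :: t := by
        simp only [List.getLast?_singleton] at h
        cases q with
        | nil => simp at h
        | cons b t => simp at h; exact ⟨t, by rw [h]⟩
      simp [pathConcat, pathEdges]
    | cons b p'' =>
      have h' : (b :: p'').getLast? = q.head? := by
        rw [← h]; rfl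
      have hne : pathConcat (b :: p'') q ≠ [] := pathConcat_ne_nil q (by simp)
      have hcons : pathConcat (a :: b :: p'') q = a :: pathConcat (b :: p'') q := rfl
      rw [hcons, pathEdges_cons_of_ne_nil a hne, ih (by simp) h',
        pathEdges_cons_of_ne_nil a (show b :: p'' ≠ [] by simp)]
      have : (pathConcat (b :: p'') q).head hne = b := by
        rw [head_pathConcat q (by simp) hne]; rfl
      rw [this]
      rfl

lemma pathWeight_pathConcat {ℓ : V → V → ℝ} {p q : List V}
    (hp : p ≠ []) (h : p.getLast? = q.head?) :
    pathWeight ℓ (pathConcat p q) = pathWeight ℓ p + pathWeight ℓ q := by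
  unfold pathWeight
  rw [pathEdges_pathConcat hp h, List.map_append, List.sum_append]

/-! ### Acyclicity: every walk is a path -/

lemma no_closed_walk {E : V → V → Prop} (hdag : Acyclic E) :
    ∀ n (w : List V), w.length ≤ n → w.Chain' E → 2 ≤ w.length →
      w.head? = w.getLast? → False := by
  intro n
  induction n with
  | zero => intro w h1 _ h2 _; omega
  | succ n ih =>
    intro w hlen hc h2 hcl
    by_cases hnd : w.tail.Nodup
    · exact hdag w ⟨h2, hc, hcl, hnd⟩
    · rw [List.Nodup, List.pairwise_iff_getElem] at hnd
      push_neg at hnd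
      obtain ⟨i, j, hi, hj, hij, heq⟩ := hnd
      have htlen : w.tail.length = w.length - 1 := by rw [List.length_tail]
      refine ih ((w.tail.take (j+1)).drop i) ?_ (hc.tail.infix (seg_infix w.tail i (j+1))) ?_ ?_
      · rw [seg_length w.tail i j hj]; omega
      · rw [seg_length w.tail i j hj]; omega
      · rw [seg_head? w.tail i j (le_of_lt hij) hj, seg_getLast? w.tail i j (le_of_lt hij) hj, heq]

lemma acyclic_nodup {E : V → V → Prop} (hdag : Acyclic E) {l : List V}
    (hc : l.Chain' E) : l.Nodup := by
  rw [List.Nodup, List.pairwise_iff_getElem]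
  by_contra hnd
  push_neg at hnd
  obtain ⟨i, j, hi, hj, hij, heq⟩ := hnd
  refine no_closed_walk hdag ((l.take (j+1)).drop i).length _ le_rfl
    (hc.infix (seg_infix l i (j+1))) ?_ ?_
  · rw [seg_length l i j hj]; omega
  · rw [seg_head? l i j (le_of_lt hij) hj, seg_getLast? l i j (le_of_lt hij) hj, heq]

/-! ### dist lemmas -/

lemma dist_le_pathWeight {E : V → V → Prop} {ℓ : V → V → ℝ} {p : List V} {a b : V}
    (h : IsPathFrom E p a b) : dist E ℓ a b ≤ (pathWeight ℓ p : EReal) :=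
  sInf_le ⟨p, h, rfl⟩

lemma exists_path_of_dist_lt {E : V → V → Prop} {ℓ : V → V → ℝ} {a b : V} {c : ℝ}
    (h : dist E ℓ a b < (c : EReal)) :
    ∃ p : List V, IsPathFrom E p a b ∧ pathWeight ℓ p < c := by
  obtain ⟨w, hw, hlt⟩ := sInf_lt_iff.1 h
  obtain ⟨p, hp, rfl⟩ := hw
  exact ⟨p, hp, EReal.coe_lt_coe_iff.1 hlt⟩

lemma isPathFrom_pathConcat {E : V → V → Prop} (hdag : Acyclic E) {p q : List V} {a m b : V}
    (hp : IsPathFrom E p a m) (hq : IsPathFrom E q m b) :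
    IsPathFrom E (pathConcat p q) a b := by
  obtain ⟨⟨hpne, _, hpc⟩, hph, hpl⟩ := hp
  obtain ⟨⟨hqne, _, hqc⟩, hqh, hql⟩ := hq
  have hmatch : p.getLast? = q.head? := by rw [hpl, hqh]
  have hchain := pathConcat_chain' hpc hqc hmatch
  exact ⟨⟨pathConcat_ne_nil q hpne, acyclic_nodup hdag hchain, hchain⟩,
    by rw [pathConcat_head? q hpne, hph],
    by rw [pathConcat_getLast? hmatch hqne, hql]⟩

lemma subpath_isPathFrom {E : V → V → Prop} {p : List V} {a b u v : V}
    (hp : IsPathFrom E p a b) (hu : u ∈ p) (hv : v ∈ p)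
    (huv : p.idxOf u ≤ p.idxOf v) : IsPathFrom E (subpath p u v) u v :=
  ⟨⟨subpath_ne_nil hu hv huv,
    List.Nodup.sublist (subpath_infix p u v).sublist hp.1.2.1,
    hp.1.2.2.infix (subpath_infix p u v)⟩,
   subpath_head? hu hv huv, subpath_getLast? hu hv huv⟩

/-! ### Subpaths of shortest paths are shortest -/

lemma shortest_subpath {E : V → V → Prop} {ℓ : V → V → ℝ} (hdag : Acyclic E)
    {R : List V} {a b u v : V} (hR : IsShortestPath E ℓ R a b)
    (hu : u ∈ R) (hv : v ∈ R) (huv : R.idxOf u ≤ R.idxOf v) :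
    (pathWeight ℓ (subpath R u v) : EReal) = dist E ℓ u v := by
  obtain ⟨hRp, hRw⟩ := hR
  have hnd : R.Nodup := hRp.1.2.1
  have ha : a ∈ R := mem_of_head? hRp.2.1
  have hb : b ∈ R := mem_of_getLast? hRp.2.2
  have hau : R.idxOf a ≤ R.idxOf u := by rw [indexOf_head hRp.2.1]; omega
  have hvb : R.idxOf v ≤ R.idxOf b := by
    rw [indexOf_getLast hnd hRp.2.2]
    have := List.idxOf_lt_length_iff.2 hv; omega
  have hA := subpath_isPathFrom hRp ha hu hau
  have hM := subpath_isPathFrom hRp hu hv huv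
  have hB := subpath_isPathFrom hRp hv hb hvb
  have hle := dist_le_pathWeight (ℓ := ℓ) hM
  rcases lt_or_eq_of_le hle with hlt | heq
  · exfalso
    obtain ⟨p', hp', hwp'⟩ := exists_path_of_dist_lt hlt
    have hR1 : IsPathFrom E (pathConcat (pathConcat (subpath R a u) p') (subpath R v b)) a b :=
      isPathFrom_pathConcat hdag (isPathFrom_pathConcat hdag hA hp') hB
    have hcontra := dist_le_pathWeight (ℓ := ℓ) hR1
    have hmatch1 : (subpath R a u).getLast? = p'.head? := by rw [hA.2.2, hp'.2.1]
    have hmatch2 : (pathConcat (subpath R a u) p').getLast? = (subpath R v b).head? := by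
      rw [pathConcat_getLast? hmatch1 hp'.1.1, hp'.2.2, hB.2.1]
    have hw1 : pathWeight ℓ (pathConcat (pathConcat (subpath R a u) p') (subpath R v b))
        = pathWeight ℓ (subpath R a u) + pathWeight ℓ p' + pathWeight ℓ (subpath R v b) := by
      rw [pathWeight_pathConcat (pathConcat_ne_nil _ hA.1.1) hmatch2,
        pathWeight_pathConcat hA.1.1 hmatch1]
    have hsplit : pathConcat (pathConcat (subpath R a u) (subpath R u v)) (subpath R v b) = R := by
      rw [subpath_concat' ha hu hv hau huv, subpath_concat' ha hv hb (hau.trans huv) hvb,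
        subpath_eq_self hnd hRp.2.1 hRp.2.2]
    have hmatch1' : (subpath R a u).getLast? = (subpath R u v).head? := by rw [hA.2.2, hM.2.1]
    have hmatch2' : (pathConcat (subpath R a u) (subpath R u v)).getLast?
        = (subpath R v b).head? := by
      rw [pathConcat_getLast? hmatch1' hM.1.1, hM.2.2, hB.2.1]
    have hw2 : pathWeight ℓ R = pathWeight ℓ (subpath R a u) + pathWeight ℓ (subpath R u v)
        + pathWeight ℓ (subpath R v b) := by
      conv_lhs => rw [← hsplit]
      rw [pathWeight_pathConcat (pathConcat_ne_nil _ hA.1.1) hmatch2',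
        pathWeight_pathConcat hA.1.1 hmatch1']
    have hreal : pathWeight ℓ (pathConcat (pathConcat (subpath R a u) p') (subpath R v b))
        < pathWeight ℓ R := by rw [hw1, hw2]; linarith
    have : dist E ℓ a b < dist E ℓ a b :=
      lt_of_le_of_lt hcontra (lt_of_lt_of_le (EReal.coe_lt_coe_iff.2 hreal) (le_of_eq hRw))
    exact lt_irrefl _ this
  · exact heq.symm


/-- In a weighted DAG, let `P ∈ Π(s1, t1)`, let `x, y ∈ V(P)`
with `x` preceding `y` on `P`, and suppose
`dist(s1, y) − dist(s1, x) = dist(s2, y) − dist(s2, x)` (all these distances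
being finite). If `Qx, Qy ∈ Π(s2, t2)` contain `x` and `y` respectively, then
`Qx[s2, x] · P[x, y] · Qy[y, t2]` is a shortest path from `s2` to `t2`. -/
theorem concat_through_segment_is_shortest
    (hdag : Acyclic E) (s1 t1 s2 t2 x y : V) (P Qx Qy : List V)
    (hP : IsShortestPath E ℓ P s1 t1) (hxy : Precedes P x y)
    (hQx : IsShortestPath E ℓ Qx s2 t2) (hxQ : x ∈ Qx)
    (hQy : IsShortestPath E ℓ Qy s2 t2) (hyQ : y ∈ Qy)
    (hfin1 : dist E ℓ s1 x ≠ ⊤) (hfin2 : dist E ℓ s1 y ≠ ⊤)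
    (hfin3 : dist E ℓ s2 x ≠ ⊤) (hfin4 : dist E ℓ s2 y ≠ ⊤)
    (hd : dist E ℓ s1 y - dist E ℓ s1 x = dist E ℓ s2 y - dist E ℓ s2 x) :
    IsShortestPath E ℓ
      (pathConcat (pathConcat (subpath Qx s2 x) (subpath P x y)) (subpath Qy y t2))
      s2 t2 := by
  obtain ⟨hPp, hPw⟩ := hP
  obtain ⟨hQxp, hQxw⟩ := hQx
  obtain ⟨hQyp, hQyw⟩ := hQy
  obtain ⟨hxP, hyP, hxyP⟩ := hxy
  have hndQy : Qy.Nodup := hQyp.1.2.1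
  have hs2x : s2 ∈ Qx := mem_of_head? hQxp.2.1
  have hs2y : s2 ∈ Qy := mem_of_head? hQyp.2.1
  have ht2y : t2 ∈ Qy := mem_of_getLast? hQyp.2.2
  have hs1P : s1 ∈ P := mem_of_head? hPp.2.1
  have hi1 : Qx.idxOf s2 ≤ Qx.idxOf x := by rw [indexOf_head hQxp.2.1]; omega
  have hi2 : Qy.idxOf s2 ≤ Qy.idxOf y := by rw [indexOf_head hQyp.2.1]; omega
  have hi3 : Qy.idxOf y ≤ Qy.idxOf t2 := by
    rw [indexOf_getLast hndQy hQyp.2.2]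
    have := List.idxOf_lt_length_iff.2 hyQ; omega
  have hi4 : P.idxOf s1 ≤ P.idxOf x := by rw [indexOf_head hPp.2.1]; omega
  have hA := subpath_isPathFrom hQxp hs2x hxQ hi1
  have hM := subpath_isPathFrom hPp hxP hyP hxyP
  have hB := subpath_isPathFrom hQyp hyQ ht2y hi3
  have hCp := subpath_isPathFrom hQyp hs2y hyQ hi2
  have hA1 := subpath_isPathFrom hPp hs1P hxP hi4
  have hwA : (pathWeight ℓ (subpath Qx s2 x) : EReal) = dist E ℓ s2 x :=
    shortest_subpath hdag ⟨hQxp, hQxw⟩ hs2x hxQ hi1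
  have hwC : (pathWeight ℓ (subpath Qy s2 y) : EReal) = dist E ℓ s2 y :=
    shortest_subpath hdag ⟨hQyp, hQyw⟩ hs2y hyQ hi2
  have hwP1 : (pathWeight ℓ (subpath P s1 x) : EReal) = dist E ℓ s1 x :=
    shortest_subpath hdag ⟨hPp, hPw⟩ hs1P hxP hi4
  have hwP2 : (pathWeight ℓ (subpath P s1 y) : EReal) = dist E ℓ s1 y :=
    shortest_subpath hdag ⟨hPp, hPw⟩ hs1P hyP (hi4.trans hxyP)
  have hsplitP : pathConcat (subpath P s1 x) (subpath P x y) = subpath P s1 y :=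
    subpath_concat' hs1P hxP hyP hi4 hxyP
  have hmP : (subpath P s1 x).getLast? = (subpath P x y).head? := by
    rw [hA1.2.2, hM.2.1]
  have hwsum1 : pathWeight ℓ (subpath P s1 y)
      = pathWeight ℓ (subpath P s1 x) + pathWeight ℓ (subpath P x y) := by
    rw [← hsplitP, pathWeight_pathConcat (subpath_ne_nil hs1P hxP hi4) hmP]
  have hsplitQ : pathConcat (subpath Qy s2 y) (subpath Qy y t2) = Qy := by
    rw [subpath_concat' hs2y hyQ ht2y hi2 hi3, subpath_eq_self hndQy hQyp.2.1 hQyp.2.2]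
  have hmQ : (subpath Qy s2 y).getLast? = (subpath Qy y t2).head? := by
    rw [hCp.2.2, hB.2.1]
  have hwsum2 : pathWeight ℓ Qy
      = pathWeight ℓ (subpath Qy s2 y) + pathWeight ℓ (subpath Qy y t2) := by
    conv_lhs => rw [← hsplitQ]
    rw [pathWeight_pathConcat (subpath_ne_nil hs2y hyQ hi2) hmQ]
  set wA := pathWeight ℓ (subpath Qx s2 x) with hwAdef
  set wM := pathWeight ℓ (subpath P x y) with hwMdef
  set wB := pathWeight ℓ (subpath Qy y t2) with hwBdef
  set wC := pathWeight ℓ (subpath Qy s2 y) with hwCdef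
  set w1 := pathWeight ℓ (subpath P s1 x) with hw1def
  set w2 := pathWeight ℓ (subpath P s1 y) with hw2def
  have hdr : w2 - w1 = wC - wA := by
    rw [← hwP2, ← hwP1, ← hwC, ← hwA, ← EReal.coe_sub, ← EReal.coe_sub,
      EReal.coe_eq_coe_iff] at hd
    exact hd
  have hPath : IsPathFrom E
      (pathConcat (pathConcat (subpath Qx s2 x) (subpath P x y)) (subpath Qy y t2)) s2 t2 :=
    isPathFrom_pathConcat hdag (isPathFrom_pathConcat hdag hA hM) hB
  have hm1 : (subpath Qx s2 x).getLast? = (subpath P x y).head? := by rw [hA.2.2, hM.2.1]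
  have hm2 : (pathConcat (subpath Qx s2 x) (subpath P x y)).getLast?
      = (subpath Qy y t2).head? := by
    rw [pathConcat_getLast? hm1 hM.1.1, hM.2.2, hB.2.1]
  have hwtotal : pathWeight ℓ
      (pathConcat (pathConcat (subpath Qx s2 x) (subpath P x y)) (subpath Qy y t2))
      = wA + wM + wB := by
    rw [pathWeight_pathConcat (pathConcat_ne_nil _ hA.1.1) hm2,
      pathWeight_pathConcat hA.1.1 hm1]
  refine ⟨hPath, ?_⟩
  rw [hwtotal]
  have hfinal : wA + wM + wB = pathWeight ℓ Qy := by rw [hwsum2]; linarith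
  rw [hfinal]
  exact hQyw


end DSP
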